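/- If q>2 and n ≡ q (mod q²), then every λ-fold 1-packing C in H(n,q) with minimum distance 2 (all codewords distinct and pairwise at Hamming distance ≥ 2) satisfies |C| ≤ λq^n/(n(q−1)+q). -/

import Mathlib

open Finset Complex

lemma hammingDist_eq_hammingNorm_sub {ι : Type*} [Fintype ι] {β : ι → Type*} [∀ i, AddGroup (β i)]
    [∀ i, DecidableEq (β i)] (x y : ∀ i, β i) : hammingDist x y = hammingNorm (x - y) := by
  simp_rw [hammingNorm, hammingDist, Pi.sub_apply, ne_eq, sub_eq_zero]

noncomputable def om (q : ℕ) : ℂ := Complex.exp (2 * Real.pi * Complex.I / q)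

lemma om_prim (q : ℕ) (hq : q ≠ 0) : IsPrimitiveRoot (om q) q :=
  Complex.isPrimitiveRoot_exp q hq

lemma om_pow_q (q : ℕ) (hq : q ≠ 0) : om q ^ q = 1 := (om_prim q hq).pow_eq_one

noncomputable def pr (q : ℕ) (s t : Fin q) : ℂ := (om q ^ (s : ℕ)) ^ (t : ℕ)

variable {q : ℕ} [NeZero q]

lemma pr_pow_q (s : Fin q) : (om q ^ (s:ℕ)) ^ q = 1 := by
  rw [← pow_mul, mul_comm, pow_mul, om_pow_q q (NeZero.ne q), one_pow]

lemma pow_mod' (z : ℂ) (hz : z ^ q = 1) (a : ℕ) : z ^ (a % q) = z ^ a := by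
  conv_rhs => rw [← Nat.div_add_mod a q]
  rw [pow_add, pow_mul, hz, one_pow, one_mul]

lemma pr_zero_right (s : Fin q) : pr q s 0 = 1 := by
  simp [pr]

lemma pr_comm (s t : Fin q) : pr q s t = pr q t s := by
  simp [pr, ← pow_mul, mul_comm]

lemma pr_zero_left (t : Fin q) : pr q 0 t = 1 := by
  rw [pr_comm, pr_zero_right]

lemma pr_add_right (s t u : Fin q) : pr q s (t + u) = pr q s t * pr q s u := by
  unfold pr
  rw [← pow_add, Fin.val_add, pow_mod' _ (pr_pow_q s)]

lemma pr_sum (s : Fin q) : ∑ t : Fin q, pr q s t = if s = 0 then (q : ℂ) else 0 := by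
  unfold pr
  rw [Fin.sum_univ_eq_sum_range (fun j => (om q ^ (s:ℕ)) ^ j) q]
  by_cases hs : s = 0
  · simp [hs]
  · rw [if_neg hs,
      geom_sum_eq ((om_prim q (NeZero.ne q)).pow_ne_one_of_pos_of_lt
        (fun (h : (s:ℕ) = 0) => hs (Fin.ext (by simp [h]))) s.isLt) q,
      pr_pow_q, sub_self, zero_div]

lemma pr_norm (s t : Fin q) : ‖pr q s t‖ = 1 := by
  unfold pr om
  rw [norm_pow, norm_pow]
  have h : ‖Complex.exp (2 * Real.pi * Complex.I / q)‖ = 1 := by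
    rw [Complex.norm_exp]
    have : (2 * Real.pi * Complex.I / q).re = 0 := by
      simp [Complex.div_re]
    rw [this, Real.exp_zero]
  rw [h, one_pow, one_pow]

lemma pr_conj (s t : Fin q) : (starRingEnd ℂ) (pr q s t) = pr q s (-t) := by
  rw [← Complex.inv_eq_conj (pr_norm s t)]
  have h : pr q s (-t) * pr q s t = 1 := by
    rw [← pr_add_right, neg_add_cancel, pr_zero_right]
  exact (eq_inv_of_mul_eq_one_left h).symm

variable {q : ℕ} [NeZero q] {n : ℕ}



noncomputable def ch (a x : Fin n → Fin q) : ℂ := ∏ i, pr q (a i) (x i)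

lemma ch_zero_right (a : Fin n → Fin q) : ch a 0 = 1 := by
  simp [ch, pr_zero_right]

lemma ch_zero_left (x : Fin n → Fin q) : ch 0 x = 1 := by
  simp [ch, pr_zero_left]

lemma ch_add_right (a x y : Fin n → Fin q) : ch a (x + y) = ch a x * ch a y := by
  simp only [ch, Pi.add_apply, pr_add_right]
  rw [Finset.prod_mul_distrib]

lemma ch_conj (a x : Fin n → Fin q) : (starRingEnd ℂ) (ch a x) = ch a (-x) := by
  simp [ch, map_prod, pr_conj]

lemma ch_sum (x : Fin n → Fin q) :
    ∑ a : Fin n → Fin q, ch a x = if x = 0 then ((q:ℂ))^n else 0 := by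
  have h1 : ∑ a : Fin n → Fin q, ch a x = ∏ i, ∑ s : Fin q, pr q s (x i) := by
    rw [Finset.prod_univ_sum (fun _ => (univ : Finset (Fin q))) (fun i s => pr q s (x i)),
      Fintype.piFinset_univ]
    rfl
  rw [h1]
  have h2 : ∀ i, ∑ s : Fin q, pr q s (x i) = if x i = 0 then (q:ℂ) else 0 := by
    intro i
    rw [show (∑ s : Fin q, pr q s (x i)) = ∑ s : Fin q, pr q (x i) s from by
      simp_rw [pr_comm]]
    exact pr_sum (x i)
  simp_rw [h2]
  by_cases hx : x = 0
  · simp [hx, Finset.card_univ]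
  · rw [if_neg hx]
    obtain ⟨i, hi⟩ : ∃ i, x i ≠ 0 := by
      by_contra h; push_neg at h; exact hx (funext h)
    exact Finset.prod_eq_zero (Finset.mem_univ i) (if_neg hi)
variable {q : ℕ} [NeZero q] {n : ℕ}

lemma hn_single (i : Fin n) (t : Fin q) (ht : t ≠ 0) :
    hammingNorm (Pi.single i t : Fin n → Fin q) = 1 := by
  unfold hammingNorm
  rw [show (filter (fun j => (Pi.single i t : Fin n → Fin q) j ≠ 0) univ) = {i} from ?_]
  · simp
  · ext j
    rcases eq_or_ne j i with rfl | hj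
    · simp [Pi.single_eq_same, ht]
    · simp [Pi.single_eq_of_ne hj, hj]

noncomputable def Bl (q n : ℕ) [NeZero q] : Finset (Fin n → Fin q) :=
  filter (fun u => hammingNorm u ≤ 1) univ

lemma mem_Bl (u : Fin n → Fin q) : u ∈ Bl q n ↔ hammingNorm u ≤ 1 := by
  simp [Bl]

lemma ball_sum (f : (Fin n → Fin q) → ℂ) :
    ∑ u ∈ Bl q n, f u
      = f 0 + ∑ i : Fin n, ∑ t ∈ (univ : Finset (Fin q)).erase 0, f (Pi.single i t) := by
  classical
  have hB : Bl q n = insert 0 (filter (fun u => hammingNorm u = 1) univ) := by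
    ext u
    simp only [mem_Bl, Finset.mem_insert, Finset.mem_filter, Finset.mem_univ, true_and]
    constructor
    · intro h
      interval_cases h' : hammingNorm u
      · exact Or.inl (hammingNorm_eq_zero.mp h')
      · exact Or.inr rfl
    · rintro (rfl | h)
      · simp
      · omega
  have h0 : (0 : Fin n → Fin q) ∉ filter (fun u => hammingNorm u = 1) univ := by
    simp [hammingNorm_eq_zero]
  rw [hB, Finset.sum_insert h0]
  congr 1
  -- sphere = image of singles
  have himg : filter (fun u => hammingNorm u = 1) (univ : Finset (Fin n → Fin q))
      = Finset.image (fun p : Fin n × Fin q => (Pi.single p.1 p.2 : Fin n → Fin q))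
          ((univ : Finset (Fin n)) ×ˢ ((univ : Finset (Fin q)).erase 0)) := by
    ext u
    simp only [Finset.mem_filter, Finset.mem_univ, true_and, Finset.mem_image,
      Finset.mem_product, Finset.mem_erase]
    constructor
    · intro hu
      obtain ⟨i, hi⟩ := Finset.card_eq_one.mp hu
      have hiu : u i ≠ 0 ∧ ∀ j, u j ≠ 0 → j = i := by
        constructor
        · have : i ∈ filter (fun j => u j ≠ 0) univ := by rw [hi]; simp
          simpa using this
        · intro j hj
          have : j ∈ filter (fun j => u j ≠ 0) univ := by simp [hj]
          rw [hi] at this; simpa using this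
      refine ⟨(i, u i), by simp [hiu.1], ?_⟩
      · funext j
        rcases eq_or_ne j i with rfl | hj
        · simp
        · rw [Pi.single_eq_of_ne hj]
          by_contra hne
          exact hj (hiu.2 j (Ne.symm hne))
    · rintro ⟨⟨i, t⟩, hm, rfl⟩
      exact hn_single i t hm.1
  rw [himg, Finset.sum_image ?_, Finset.sum_product]
  intro p hp p' hp' he
  beta_reduce at he
  simp only [Finset.mem_coe, Finset.mem_product, Finset.mem_erase] at hp hp'
  have h1 : p.1 = p'.1 := by
    by_contra hne
    have := congrFun he p.1
    rw [Pi.single_eq_same, Pi.single_eq_of_ne hne] at this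
    exact hp.2.1 this
  have h2 : p.2 = p'.2 := by
    have := congrFun he p.1
    rwa [Pi.single_eq_same, h1, Pi.single_eq_same] at this
  exact Prod.ext h1 h2

noncomputable def gg (q n : ℕ) [NeZero q] (a : Fin n → Fin q) : ℂ :=
  ∑ u ∈ Bl q n, ch a u

lemma hn_le (a : Fin n → Fin q) : hammingNorm a ≤ n := by
  unfold hammingNorm
  calc (filter (fun i => a i ≠ 0) univ).card ≤ (univ : Finset (Fin n)).card :=
        Finset.card_filter_le _ _
    _ = n := by simp

lemma gg_closed (a : Fin n → Fin q) :
    gg q n a = ((n * (q-1) + 1 : ℕ) : ℂ) - q * (hammingNorm a : ℂ) := by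
  have hq1 : 1 ≤ q := Nat.one_le_iff_ne_zero.mpr (NeZero.ne q)
  unfold gg
  rw [ball_sum, ch_zero_right]
  have hsingle : ∀ (i : Fin n) (t : Fin q), ch a (Pi.single i t) = pr q (a i) t := by
    intro i t
    unfold ch
    rw [Finset.prod_eq_single i]
    · rw [Pi.single_eq_same]
    · intro j _ hj
      rw [Pi.single_eq_of_ne hj, pr_zero_right]
    · intro h; exact absurd (Finset.mem_univ i) h
  simp_rw [hsingle]
  have hinner : ∀ i : Fin n, ∑ t ∈ (univ : Finset (Fin q)).erase 0, pr q (a i) t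
      = (if a i = 0 then (q:ℂ) else 0) - 1 := by
    intro i
    have := Finset.add_sum_erase (univ : Finset (Fin q)) (pr q (a i)) (Finset.mem_univ 0)
    rw [pr_zero_right] at this
    rw [← pr_sum (a i), ← this]
    ring
  simp_rw [hinner]
  rw [Finset.sum_sub_distrib]
  have hsplit : ∀ i, (if a i = 0 then (q:ℂ) else 0) = (q:ℂ) - (if a i ≠ 0 then (q:ℂ) else 0) := by
    intro i; by_cases h : a i = 0 <;> simp [h]
  simp_rw [hsplit]
  rw [Finset.sum_sub_distrib, Finset.sum_ite, Finset.sum_const_zero, add_zero]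
  unfold hammingNorm
  simp only [Finset.sum_const, Finset.card_univ, Fintype.card_fin, nsmul_eq_mul]
  push_cast [Nat.cast_sub hq1]
  ring

lemma sum_swap3 {M α β γ δ : Type*} [AddCommMonoid M] (A : Finset α) (B : Finset β)
    (Γ : Finset γ) (Δ : Finset δ) (f : α → β → γ → δ → M) :
    ∑ a ∈ A, ∑ b ∈ B, ∑ c ∈ Γ, ∑ d ∈ Δ, f a b c d
      = ∑ b ∈ B, ∑ c ∈ Γ, ∑ d ∈ Δ, ∑ a ∈ A, f a b c d := by
  rw [Finset.sum_comm]
  exact Finset.sum_congr rfl fun b _ => by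
    rw [Finset.sum_comm]
    exact Finset.sum_congr rfl fun c _ => Finset.sum_comm

lemma sum_swap4 {M α β γ δ ε : Type*} [AddCommMonoid M] (A : Finset α) (B : Finset β)
    (Γ : Finset γ) (Δ : Finset δ) (E : Finset ε) (f : α → β → γ → δ → ε → M) :
    ∑ a ∈ A, ∑ b ∈ B, ∑ c ∈ Γ, ∑ d ∈ Δ, ∑ e ∈ E, f a b c d e
      = ∑ b ∈ B, ∑ c ∈ Γ, ∑ d ∈ Δ, ∑ e ∈ E, ∑ a ∈ A, f a b c d e := by
  rw [Finset.sum_comm]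
  exact Finset.sum_congr rfl fun b _ => sum_swap3 _ _ _ _ _

lemma sum_indicator {M α : Type*} [AddCommMonoid M] [Fintype α] [DecidableEq α]
    (S : Finset α) (f : α → M) :
    ∑ u ∈ S, f u = ∑ u : α, if u ∈ S then f u else 0 := by
  rw [Finset.sum_ite_mem, Finset.univ_inter]


variable (Cf : Finset (Fin n → Fin q))

noncomputable def TT (a : Fin n → Fin q) : ℂ := ∑ c ∈ Cf, ch a c

lemma TT_expand (a : Fin n → Fin q) :
    TT Cf a * (starRingEnd ℂ) (TT Cf a) = ∑ c ∈ Cf, ∑ c' ∈ Cf, ch a (c - c') := by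
  unfold TT
  rw [map_sum, Finset.sum_mul_sum]
  refine Finset.sum_congr rfl fun c _ => Finset.sum_congr rfl fun c' _ => ?_
  rw [ch_conj, ← ch_add_right, sub_eq_add_neg]

lemma E0 : ∑ a : Fin n → Fin q, TT Cf a * (starRingEnd ℂ) (TT Cf a)
    = (q:ℂ)^n * Cf.card := by
  simp_rw [TT_expand]
  rw [Finset.sum_comm]
  have h : ∀ c ∈ Cf, ∑ a : Fin n → Fin q, ∑ c' ∈ Cf, ch a (c - c')
      = (q:ℂ)^n := by
    intro c hc
    rw [Finset.sum_comm]
    have h1 : ∀ c' ∈ Cf, ∑ a : Fin n → Fin q, ch a (c - c')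
        = if c' = c then ((q:ℂ))^n else 0 := by
      intro c' _
      rw [ch_sum]; simp only [sub_eq_zero]
      by_cases h : c = c' <;> simp [h, eq_comm]
    rw [Finset.sum_congr rfl h1, Finset.sum_ite_eq' Cf c (fun _ => ((q:ℂ))^n), if_pos hc]
  rw [Finset.sum_congr rfl h, Finset.sum_const, nsmul_eq_mul, mul_comm]

def cov (v : Fin n → Fin q) : ℕ := (Cf.filter (fun c => hammingDist v c ≤ 1)).card

lemma E1 (hd1 : ∀ c ∈ Cf, ∀ c' ∈ Cf, hammingDist c c' ≤ 1 → c = c') :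
    ∑ a : Fin n → Fin q, gg q n a * (TT Cf a * (starRingEnd ℂ) (TT Cf a))
      = (q:ℂ)^n * Cf.card := by
  have expand : ∀ a : Fin n → Fin q, gg q n a * (TT Cf a * (starRingEnd ℂ) (TT Cf a))
      = ∑ c ∈ Cf, ∑ c' ∈ Cf, ∑ u ∈ Bl q n, ch a (u + (c - c')) := by
    intro a
    rw [TT_expand, Finset.mul_sum]
    refine Finset.sum_congr rfl fun c _ => ?_
    rw [Finset.mul_sum]
    refine Finset.sum_congr rfl fun c' _ => ?_
    unfold gg
    rw [Finset.sum_mul]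
    exact Finset.sum_congr rfl fun u _ => (ch_add_right a u (c - c')).symm
  simp_rw [expand]
  rw [sum_swap3]
  have key : ∀ c ∈ Cf, ∑ c' ∈ Cf, ∑ u ∈ Bl q n, ∑ a : Fin n → Fin q,
      ch a (u + (c - c')) = (q:ℂ)^n := by
    intro c hc
    have inner : ∀ c' ∈ Cf, ∑ u ∈ Bl q n, ∑ a : Fin n → Fin q, ch a (u + (c - c'))
        = if c' = c then ((q:ℂ))^n else 0 := by
      intro c' hc'
      have h1 : ∀ u ∈ Bl q n, ∑ a : Fin n → Fin q, ch a (u + (c - c'))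
          = if u = c' - c then ((q:ℂ))^n else 0 := by
        intro u _
        rw [ch_sum]
        rw [show u + (c - c') = u - (c' - c) from by abel]
        simp only [sub_eq_zero]
      rw [Finset.sum_congr rfl h1, Finset.sum_ite_eq' (Bl q n) (c' - c) (fun _ => ((q:ℂ))^n)]
      have hmem : c' - c ∈ Bl q n ↔ c' = c := by
        rw [mem_Bl, ← hammingDist_eq_hammingNorm_sub]
        constructor
        · intro h
          exact hd1 c' hc' c hc h
        · rintro rfl
          simp
      by_cases h : c' = c
      · rw [if_pos (hmem.mpr h), if_pos h]
      · rw [if_neg (fun hm => h (hmem.mp hm)), if_neg h]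
    rw [Finset.sum_congr rfl inner, Finset.sum_ite_eq' Cf c (fun _ => ((q:ℂ))^n), if_pos hc]
  rw [Finset.sum_congr rfl key, Finset.sum_const, nsmul_eq_mul, mul_comm]

lemma E2 :
    ∑ a : Fin n → Fin q, gg q n a * gg q n a * (TT Cf a * (starRingEnd ℂ) (TT Cf a))
      = (q:ℂ)^n * ∑ v : Fin n → Fin q, ((cov Cf v : ℂ))^2 := by
  have expand : ∀ a : Fin n → Fin q,
      gg q n a * gg q n a * (TT Cf a * (starRingEnd ℂ) (TT Cf a))
      = ∑ c ∈ Cf, ∑ c' ∈ Cf, ∑ u ∈ Bl q n, ∑ u' ∈ Bl q n, ch a (u + u' + (c - c')) := by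
    intro a
    rw [TT_expand, Finset.mul_sum]
    refine Finset.sum_congr rfl fun c _ => ?_
    rw [Finset.mul_sum]
    refine Finset.sum_congr rfl fun c' _ => ?_
    unfold gg
    rw [Finset.sum_mul_sum, Finset.sum_mul]
    refine Finset.sum_congr rfl fun u _ => ?_
    rw [Finset.sum_mul]
    refine Finset.sum_congr rfl fun u' _ => ?_
    rw [← ch_add_right, ← ch_add_right, add_assoc]
  simp_rw [expand]
  rw [sum_swap4]
  have key : ∀ c ∈ Cf, ∀ c' ∈ Cf, ∑ u ∈ Bl q n, ∑ u' ∈ Bl q n, ∑ a : Fin n → Fin q,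
      ch a (u + u' + (c - c'))
      = (q:ℂ)^n * ∑ v : Fin n → Fin q,
          (if hammingDist v c ≤ 1 then (1:ℂ) else 0) * (if hammingDist v c' ≤ 1 then (1:ℂ) else 0) := by
    intro c _ c' _
    have h1 : ∀ u ∈ Bl q n, ∑ u' ∈ Bl q n, ∑ a : Fin n → Fin q, ch a (u + u' + (c - c'))
        = if c' - c - u ∈ Bl q n then ((q:ℂ))^n else 0 := by
      intro u _
      have h2 : ∀ u' ∈ Bl q n, ∑ a : Fin n → Fin q, ch a (u + u' + (c - c'))
          = if u' = c' - c - u then ((q:ℂ))^n else 0 := by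
        intro u' _
        rw [ch_sum, show u + u' + (c - c') = u' - (c' - c - u) from by abel]
        simp only [sub_eq_zero]
      rw [Finset.sum_congr rfl h2, Finset.sum_ite_eq' (Bl q n) _ (fun _ => ((q:ℂ))^n)]
    rw [Finset.sum_congr rfl h1]
    rw [sum_indicator (Bl q n) (fun u => if c' - c - u ∈ Bl q n then ((q:ℂ))^n else 0)]
    rw [Fintype.sum_equiv (Equiv.subRight c).symm
      (fun u => if u ∈ Bl q n then (if c' - c - u ∈ Bl q n then ((q:ℂ))^n else 0) else 0)
      (fun v => (q:ℂ)^n * ((if hammingDist v c ≤ 1 then (1:ℂ) else 0)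
          * (if hammingDist v c' ≤ 1 then (1:ℂ) else 0))) ?_]
    · rw [← Finset.mul_sum]
    · intro x
      have e1 : (Equiv.subRight c).symm x = x + c := rfl
      rw [e1]
      have hneg : ∀ y : Fin n → Fin q, hammingNorm (-y) = hammingNorm y := by
        intro y; simp [hammingNorm, neg_eq_zero]
      have hd1 : x ∈ Bl q n ↔ hammingDist (x + c) c ≤ 1 := by
        rw [mem_Bl, hammingDist_eq_hammingNorm_sub, add_sub_cancel_right]
      have hd2 : c' - c - x ∈ Bl q n ↔ hammingDist (x + c) c' ≤ 1 := by
        rw [mem_Bl, hammingDist_eq_hammingNorm_sub,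
          show c' - c - x = -(x + c - c') from by abel, hneg]
      by_cases hA : hammingDist (x + c) c ≤ 1 <;> by_cases hB : hammingDist (x + c) c' ≤ 1 <;>
        simp [hd1, hd2, hA, hB]
  calc ∑ c ∈ Cf, ∑ c' ∈ Cf, ∑ u ∈ Bl q n, ∑ u' ∈ Bl q n, ∑ a : Fin n → Fin q,
        ch a (u + u' + (c - c'))
      = ∑ c ∈ Cf, ∑ c' ∈ Cf, (q:ℂ)^n * ∑ v : Fin n → Fin q,
          (if hammingDist v c ≤ 1 then (1:ℂ) else 0) * (if hammingDist v c' ≤ 1 then (1:ℂ) else 0) := by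
        exact Finset.sum_congr rfl fun c hc => Finset.sum_congr rfl fun c' hc' => key c hc c' hc'
    _ = (q:ℂ)^n * (∑ c ∈ Cf, ∑ c' ∈ Cf, ∑ v : Fin n → Fin q,
          (if hammingDist v c ≤ 1 then (1:ℂ) else 0) * (if hammingDist v c' ≤ 1 then (1:ℂ) else 0)) := by
        simp_rw [← Finset.mul_sum]
    _ = (q:ℂ)^n * ∑ v : Fin n → Fin q, ((cov Cf v : ℂ))^2 := by
        congr 1
        have hcov : ∀ v, (∑ c ∈ Cf, if hammingDist v c ≤ 1 then (1:ℂ) else 0) = (cov Cf v : ℂ) := by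
          intro v
          rw [Finset.sum_boole]
          rfl
        calc ∑ c ∈ Cf, ∑ c' ∈ Cf, ∑ v : Fin n → Fin q,
              (if hammingDist v c ≤ 1 then (1:ℂ) else 0) * (if hammingDist v c' ≤ 1 then (1:ℂ) else 0)
            = ∑ v : Fin n → Fin q, ∑ c ∈ Cf, ∑ c' ∈ Cf,
              (if hammingDist v c ≤ 1 then (1:ℂ) else 0) * (if hammingDist v c' ≤ 1 then (1:ℂ) else 0) := by
              rw [show (∑ c ∈ Cf, ∑ c' ∈ Cf, ∑ v : Fin n → Fin q,
                  (if hammingDist v c ≤ 1 then (1:ℂ) else 0) * (if hammingDist v c' ≤ 1 then (1:ℂ) else 0))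
                = ∑ c ∈ Cf, ∑ v : Fin n → Fin q, ∑ c' ∈ Cf,
                  (if hammingDist v c ≤ 1 then (1:ℂ) else 0) * (if hammingDist v c' ≤ 1 then (1:ℂ) else 0)
                from Finset.sum_congr rfl fun c _ => Finset.sum_comm]
              exact Finset.sum_comm
          _ = ∑ v : Fin n → Fin q, ((cov Cf v : ℂ))^2 := by
              refine Finset.sum_congr rfl fun v _ => ?_
              rw [← Finset.sum_mul_sum, hcov]; ring

lemma cov_eq_one (Cf : Finset (Fin n → Fin q))
    (hd1 : ∀ c ∈ Cf, ∀ c' ∈ Cf, hammingDist c c' ≤ 1 → c = c')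
    {v : Fin n → Fin q} (hv : v ∈ Cf) : cov Cf v = 1 := by
  unfold cov
  rw [show Cf.filter (fun c => hammingDist v c ≤ 1) = {v} from ?_]
  · simp
  · ext c
    simp only [Finset.mem_filter, Finset.mem_singleton]
    constructor
    · rintro ⟨hc, hdc⟩
      exact (hd1 v hv c hc hdc).symm
    · rintro rfl
      simp [hv]

lemma card_Bl : (Bl q n).card = n * (q-1) + 1 := by
  have h := gg_closed (q := q) (n := n) 0
  unfold gg at h
  have h2 : ∑ u ∈ Bl q n, ch (0 : Fin n → Fin q) u = ((Bl q n).card : ℂ) := by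
    rw [Finset.sum_congr rfl (fun u _ => ch_zero_left u), Finset.sum_const, nsmul_eq_mul, mul_one]
  rw [h2, show hammingNorm (0 : Fin n → Fin q) = 0 from hammingNorm_eq_zero.mpr rfl] at h
  simp only [Nat.cast_zero, mul_zero, sub_zero] at h
  exact_mod_cast h

lemma ball_card (c : Fin n → Fin q) :
    (Finset.filter (fun v => hammingDist v c ≤ 1) Finset.univ).card = (Bl q n).card := by
  apply Finset.card_bij' (fun v _ => v - c) (fun u _ => u + c)
  · intro v hv
    simp only [Finset.mem_filter, Finset.mem_univ, true_and] at hv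
    rw [mem_Bl, ← hammingDist_eq_hammingNorm_sub]
    exact hv
  · intro u hu
    rw [mem_Bl] at hu
    simp only [Finset.mem_filter, Finset.mem_univ, true_and]
    rw [hammingDist_eq_hammingNorm_sub, add_sub_cancel_right]
    exact hu
  · intro v _; abel
  · intro u _; abel

lemma sum_cov (Cf : Finset (Fin n → Fin q)) :
    ∑ v : Fin n → Fin q, cov Cf v = (n * (q-1) + 1) * Cf.card := by
  unfold cov
  simp_rw [Finset.card_filter]
  rw [Finset.sum_comm]
  have h : ∀ c ∈ Cf, (∑ v : Fin n → Fin q, if hammingDist v c ≤ 1 then 1 else 0)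
      = n * (q-1) + 1 := by
    intro c _
    rw [← Finset.card_filter, ball_card c, card_Bl]
  rw [Finset.sum_congr rfl h, Finset.sum_const, smul_eq_mul, mul_comm]

/-- Bound for λ-fold 1-packings with minimum distance 2. -/
theorem stmt_9 (q n lam : ℕ) (hq : 2 < q) (hmod : n % q ^ 2 = q % q ^ 2)
    (C : Finset (Fin n → Fin q))
    (hdist : ∀ x ∈ C, ∀ y ∈ C, x ≠ y → 2 ≤ hammingDist x y)
    (hpack : ∀ v : Fin n → Fin q,
      (C.filter (fun c => hammingDist v c ≤ 1)).card ≤ lam) :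
    (C.card : ℚ) ≤ lam * q ^ n / (n * (q - 1) + q) := by
  haveI : NeZero q := ⟨by omega⟩
  have hq1 : 1 ≤ q := by omega
  have hqq : q < q ^ 2 := by nlinarith
  have hnq : n % q ^ 2 = q := by rw [hmod, Nat.mod_eq_of_lt hqq]
  have hn_ge : q ≤ n := by
    rcases lt_or_ge n (q ^ 2) with h | h
    · rw [Nat.mod_eq_of_lt h] at hnq; omega
    · omega
  have hdvd : q ∣ n := by
    apply Nat.dvd_of_mod_eq_zero
    have h2 : n % q ^ 2 % q = n % q := Nat.mod_mod_of_dvd n (dvd_pow_self q (by norm_num))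
    rw [hnq, Nat.mod_self] at h2
    exact h2.symm
  set N := C.card with hN
  set V := n * (q - 1) + 1 with hV
  have hd1 : ∀ c ∈ C, ∀ c' ∈ C, hammingDist c c' ≤ 1 → c = c' := by
    intro c hc c' hc' hle
    by_contra hne
    have := hdist c hc c' hc' hne
    omega
  -- positive denominator case handling
  have hdenq : (0:ℚ) < (n:ℚ) * ((q:ℚ) - 1) + q := by
    have h3 : (3:ℚ) ≤ (q:ℚ) := by exact_mod_cast hq
    have hn0 : (0:ℚ) ≤ (n:ℚ) := by positivity
    nlinarith
  rcases Nat.eq_zero_or_pos N with hN0 | hNpos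
  · rw [hN0]
    push_cast
    positivity
  -- main combined identity over ℂ
  have comb : ∑ a : Fin n → Fin q,
      (gg q n a - 1) * (gg q n a + ((q:ℂ) - 1)) * (TT C a * (starRingEnd ℂ) (TT C a))
      = (q:ℂ)^n * ((∑ v : Fin n → Fin q, ((cov C v : ℂ))^2) - N) := by
    have e0 := E0 C
    have e1 := E1 C hd1
    have e2 := E2 C
    have hsplit : ∀ a : Fin n → Fin q,
        (gg q n a - 1) * (gg q n a + ((q:ℂ) - 1)) * (TT C a * (starRingEnd ℂ) (TT C a))
        = gg q n a * gg q n a * (TT C a * (starRingEnd ℂ) (TT C a))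
          + ((q:ℂ) - 2) * (gg q n a * (TT C a * (starRingEnd ℂ) (TT C a)))
          - ((q:ℂ) - 1) * (TT C a * (starRingEnd ℂ) (TT C a)) := by
      intro a; ring
    rw [Finset.sum_congr rfl (fun a _ => hsplit a)]
    rw [Finset.sum_sub_distrib, Finset.sum_add_distrib, ← Finset.mul_sum, ← Finset.mul_sum]
    rw [e0, e1, e2]
    ring
  -- convert to a real identity
  set W : (Fin n → Fin q) → ℝ := fun a =>
    (((V:ℝ) - q * (hammingNorm a)) - 1) * (((V:ℝ) - q * (hammingNorm a)) + ((q:ℝ) - 1))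
      * Complex.normSq (TT C a) with hW
  have hterm : ∀ a : Fin n → Fin q,
      (gg q n a - 1) * (gg q n a + ((q:ℂ) - 1)) * (TT C a * (starRingEnd ℂ) (TT C a))
      = ((W a : ℝ) : ℂ) := by
    intro a
    rw [gg_closed, Complex.mul_conj, hW, hV]
    push_cast [Nat.cast_sub hq1]
    ring
  have realeq : ∑ a : Fin n → Fin q, W a
      = (q:ℝ)^n * ((∑ v : Fin n → Fin q, ((cov C v : ℝ))^2) - N) := by
    apply Complex.ofReal_injective
    have h := comb
    rw [Finset.sum_congr rfl (fun a _ => hterm a)] at h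
    push_cast
    push_cast at h
    convert h using 2
  -- positivity of the weights
  set A := (n / q) * (q - 1) with hA
  have hqA : (q:ℝ) * (A:ℝ) = (V:ℝ) - 1 := by
    have : q * A = n * (q-1) := by
      rw [hA, ← mul_assoc, Nat.mul_div_cancel' hdvd]
    have h2 : ((q * A : ℕ) : ℝ) = ((n * (q-1) : ℕ) : ℝ) := by rw [this]
    push_cast at h2
    rw [hV]
    push_cast
    linarith
  have hWpos : ∀ a : Fin n → Fin q, 0 ≤ W a := by
    intro a
    set zR : ℝ := (((A:ℤ) - hammingNorm a : ℤ) : ℝ) with hzR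
    have hz : (0:ℤ) ≤ ((A:ℤ) - hammingNorm a) * (((A:ℤ) - hammingNorm a) + 1) := by
      rcases le_or_gt 0 ((A:ℤ) - hammingNorm a) with h | h
      · exact mul_nonneg h (by linarith)
      · have h1 : (A:ℤ) - hammingNorm a + 1 ≤ 0 := by omega
        have h2 := mul_nonneg (neg_nonneg.mpr (le_of_lt h)) (neg_nonneg.mpr h1)
        rwa [neg_mul_neg] at h2
    have hz' : (0:ℝ) ≤ zR * (zR + 1) := by
      rw [hzR]
      exact_mod_cast hz
    have hcz : zR = (A:ℝ) - (hammingNorm a : ℝ) := by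
      rw [hzR]; push_cast; ring
    have hf1 : ((V:ℝ) - q * (hammingNorm a)) - 1 = q * zR := by
      rw [hcz]; linear_combination -hqA
    have hf2 : ((V:ℝ) - q * (hammingNorm a)) + ((q:ℝ) - 1) = q * (zR + 1) := by
      rw [hcz]; linear_combination -hqA
    rw [hW]
    simp only []
    rw [hf1, hf2, show (q:ℝ) * zR * ((q:ℝ) * (zR + 1)) * Complex.normSq (TT C a)
      = (q:ℝ)^2 * (zR * (zR + 1)) * Complex.normSq (TT C a) from by ring]
    exact mul_nonneg (mul_nonneg (by positivity) hz') (Complex.normSq_nonneg _)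
  -- single term lower bound at a = 0
  have hW0 : W 0 = ((V:ℝ) - 1) * ((V:ℝ) + ((q:ℝ) - 1)) * (N:ℝ)^2 := by
    rw [hW]
    have h0 : hammingNorm (0 : Fin n → Fin q) = 0 := hammingNorm_eq_zero.mpr rfl
    have hT0 : TT C (0 : Fin n → Fin q) = (N : ℂ) := by
      unfold TT
      rw [Finset.sum_congr rfl (fun c _ => ch_zero_left c), Finset.sum_const, nsmul_eq_mul, mul_one]
    simp only [h0, hT0, Nat.cast_zero, mul_zero, sub_zero]
    try rw [show ((N:ℕ) : ℂ) = (((N:ℕ):ℝ) : ℂ) from by push_cast; rfl, Complex.normSq_ofReal]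
    try ring
  have hlower : ((V:ℝ) - 1) * ((V:ℝ) + ((q:ℝ) - 1)) * (N:ℝ)^2
      ≤ (q:ℝ)^n * ((∑ v : Fin n → Fin q, ((cov C v : ℝ))^2) - N) := by
    rw [← realeq, ← hW0]
    exact Finset.single_le_sum (fun a _ => hWpos a) (Finset.mem_univ 0)
  -- packing upper bound on P
  have hPupper : (∑ v : Fin n → Fin q, ((cov C v : ℝ))^2) + ((lam:ℝ) - 1) * N
      ≤ (lam:ℝ) * ((V:ℝ) * N) := by
    have hpt : ∀ v : Fin n → Fin q,
        ((cov C v : ℝ))^2 + ((lam:ℝ) - 1) * (if v ∈ C then (1:ℝ) else 0)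
          ≤ (lam:ℝ) * (cov C v) := by
      intro v
      by_cases hv : v ∈ C
      · rw [if_pos hv, cov_eq_one C hd1 hv]
        push_cast
        nlinarith
      · rw [if_neg hv]
        have hle : (cov C v : ℝ) ≤ lam := by exact_mod_cast hpack v
        have h0 : (0:ℝ) ≤ (cov C v : ℝ) := by positivity
        nlinarith
    have hsum := Finset.sum_le_sum (fun v (_ : v ∈ Finset.univ) => hpt v)
    rw [Finset.sum_add_distrib, ← Finset.mul_sum, ← Finset.mul_sum] at hsum
    have hind : (∑ v : Fin n → Fin q, if v ∈ C then (1:ℝ) else 0) = N := by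
      rw [Finset.sum_boole]
      congr 1
      rw [Finset.filter_univ_mem]
    have hsc : (∑ v : Fin n → Fin q, (cov C v : ℝ)) = (V:ℝ) * N := by
      have := sum_cov C
      have h2 : ((∑ v : Fin n → Fin q, cov C v : ℕ) : ℝ) = (((n * (q-1) + 1) * N : ℕ) : ℝ) := by
        rw [this]
      push_cast at h2
      rw [hV]
      push_cast
      linarith
    rw [hind, hsc] at hsum
    linarith [hsum]
  -- combine
  have hfinal : ((V:ℝ) + ((q:ℝ) - 1)) * N ≤ (lam:ℝ) * (q:ℝ)^n := by
    have hq0 : (0:ℝ) < (q:ℝ)^n := by positivity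
    have hchain : ((V:ℝ) - 1) * ((V:ℝ) + ((q:ℝ) - 1)) * (N:ℝ)^2
        ≤ (q:ℝ)^n * ((lam:ℝ) * ((V:ℝ) - 1) * N) := by
      have h2 : (∑ v : Fin n → Fin q, ((cov C v : ℝ))^2) - N ≤ (lam:ℝ) * ((V:ℝ) - 1) * N := by
        nlinarith [hPupper]
      calc ((V:ℝ) - 1) * ((V:ℝ) + ((q:ℝ) - 1)) * (N:ℝ)^2
          ≤ (q:ℝ)^n * ((∑ v : Fin n → Fin q, ((cov C v : ℝ))^2) - N) := hlower
        _ ≤ (q:ℝ)^n * ((lam:ℝ) * ((V:ℝ) - 1) * N) := by nlinarith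
    have hVm1 : (0:ℝ) < (V:ℝ) - 1 := by
      rw [hV]
      have : 1 ≤ n * (q - 1) := by
        have hn1 : 1 ≤ n := by omega
        have hq2 : 1 ≤ q - 1 := by omega
        calc 1 = 1 * 1 := by ring
          _ ≤ n * (q - 1) := Nat.mul_le_mul hn1 hq2
      push_cast
      have h2 : (1:ℝ) ≤ ((n * (q-1) : ℕ) : ℝ) := by exact_mod_cast this
      push_cast at h2
      linarith
    have hNpos' : (0:ℝ) < (N:ℝ) := by exact_mod_cast hNpos
    have hmul : (((V:ℝ) - 1) * N) * (((V:ℝ) + ((q:ℝ) - 1)) * N)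
        ≤ (((V:ℝ) - 1) * N) * ((lam:ℝ) * (q:ℝ)^n) := by nlinarith [hchain]
    have hposmul : (0:ℝ) < ((V:ℝ) - 1) * N := mul_pos hVm1 hNpos'
    exact le_of_mul_le_mul_left hmul hposmul
  -- conclude in ℚ
  rw [le_div_iff₀ hdenq]
  have hcast : ((V:ℝ) + ((q:ℝ) - 1)) = ((n:ℝ) * ((q:ℝ) - 1) + q) := by
    rw [hV]
    push_cast [Nat.cast_sub hq1]
    ring
  rw [hcast] at hfinal
  have hQ : (N:ℚ) * ((n:ℚ) * ((q:ℚ) - 1) + q) ≤ (lam:ℚ) * (q:ℚ)^n := by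
    have hfin2 : (N:ℝ) * ((n:ℝ) * ((q:ℝ) - 1) + q) ≤ (lam:ℝ) * (q:ℝ)^n := by linarith
    have hnat : (N * (n * (q-1) + q) : ℕ) ≤ (lam * q^n : ℕ) := by
      have hl : ((N * (n * (q-1) + q) : ℕ) : ℝ) = (N:ℝ) * ((n:ℝ) * ((q:ℝ) - 1) + q) := by
        push_cast [Nat.cast_sub hq1]
        ring
      have hr : ((lam * q^n : ℕ) : ℝ) = (lam:ℝ) * (q:ℝ)^n := by push_cast; ring
      rw [← hl, ← hr] at hfin2
      exact_mod_cast hfin2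
    have := (Nat.cast_le (α := ℚ)).mpr hnat
    push_cast [Nat.cast_sub hq1] at this
    linarith
  exact hQ
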